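/- In a weighted bipartite graph G, for fixed α, β and query vertex q, the significant (α,β)-community of q is unique and is a subgraph of the (α,β)-community of q. -/

import Mathlib

variable {V : Type*}

/-- Upper-layer vertices of an (edge-set) bipartite subgraph. -/
def upperVerts [DecidableEq V] (S : Finset (V × V)) : Finset V := S.image Prod.fst

/-- Lower-layer vertices. -/
def lowerVerts [DecidableEq V] (S : Finset (V × V)) : Finset V := S.image Prod.snd

/-- All vertices. -/
def bverts [DecidableEq V] (S : Finset (V × V)) : Finset V := upperVerts S ∪ lowerVerts S

/-- Degree of an upper vertex. -/
def updeg [DecidableEq V] (S : Finset (V × V)) (u : V) : ℕ :=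
  (S.filter (fun e => e.1 = u)).card

/-- Degree of a lower vertex. -/
def lowdeg [DecidableEq V] (S : Finset (V × V)) (v : V) : ℕ :=
  (S.filter (fun e => e.2 = v)).card

/-- The (α,β) degree constraint. -/
def DegConstr [DecidableEq V] (α β : ℕ) (S : Finset (V × V)) : Prop :=
  (∀ u ∈ upperVerts S, α ≤ updeg S u) ∧ (∀ v ∈ lowerVerts S, β ≤ lowdeg S v)

/-- Adjacency relation induced by the edge set. -/
def adjRel (S : Finset (V × V)) (a b : V) : Prop := (a, b) ∈ S ∨ (b, a) ∈ S

/-- Connectivity of an edge-set subgraph. -/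
def Conn [DecidableEq V] (S : Finset (V × V)) : Prop :=
  ∀ a ∈ bverts S, ∀ b ∈ bverts S, Relation.ReflTransGen (adjRel S) a b

/-- `C` is the (α,β)-core of the bipartite graph with edge set `E`:
it is a subgraph satisfying the degree constraints that contains every
subgraph of `E` satisfying the constraints (hence it is maximal). -/
def IsCore [DecidableEq V] (E : Finset (V × V)) (α β : ℕ) (C : Finset (V × V)) : Prop :=
  C ⊆ E ∧ DegConstr α β C ∧ ∀ S ⊆ E, DegConstr α β S → S ⊆ C

/-- `C` is the (α,β)-community of `q`: the maximal connected subgraph of the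
core `Ecore` containing `q`. -/
def IsCommunity [DecidableEq V] (Ecore : Finset (V × V)) (q : V) (C : Finset (V × V)) : Prop :=
  C ⊆ Ecore ∧ Conn C ∧ q ∈ bverts C ∧ ∀ S ⊆ Ecore, Conn S → q ∈ bverts S → S ⊆ C

/-- `S` is the significant (α,β)-community of `q` inside the (α,β)-community `K`:
connected, contains `q`, satisfies the degree constraints, maximizes the minimum
edge weight `Finset.inf w`, and no proper supergraph with the same properties has
equal weight. -/
def IsSigCom [DecidableEq V] (K : Finset (V × V)) (α β : ℕ) (q : V) (w : V × V → ENNReal)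
    (S : Finset (V × V)) : Prop :=
  S ⊆ K ∧ Conn S ∧ q ∈ bverts S ∧ DegConstr α β S ∧
  (∀ S' ⊆ K, Conn S' → q ∈ bverts S' → DegConstr α β S' → S'.inf w ≤ S.inf w) ∧
  (∀ S', S ⊂ S' → S' ⊆ K → Conn S' → q ∈ bverts S' → DegConstr α β S' → S'.inf w ≠ S.inf w)

/-- The α-offset of `u`: the maximal `β` such that `u` is in the (α,β)-core. -/
noncomputable def saOff [DecidableEq V] (E : Finset (V × V)) (u : V) (α : ℕ) : ℕ :=
  sSup {b | ∃ C, IsCore E α b C ∧ u ∈ bverts C}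

lemma bverts_union [DecidableEq V] (S T : Finset (V × V)) :
    bverts (S ∪ T) = bverts S ∪ bverts T := by
  simp [bverts, upperVerts, lowerVerts, Finset.image_union]
  ac_rfl

lemma updeg_mono [DecidableEq V] {S T : Finset (V × V)} (h : S ⊆ T) (u : V) :
    updeg S u ≤ updeg T u :=
  Finset.card_le_card (Finset.filter_subset_filter _ h)

lemma lowdeg_mono [DecidableEq V] {S T : Finset (V × V)} (h : S ⊆ T) (v : V) :
    lowdeg S v ≤ lowdeg T v :=
  Finset.card_le_card (Finset.filter_subset_filter _ h)

lemma degConstr_union [DecidableEq V] {α β : ℕ} {S T : Finset (V × V)}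
    (hS : DegConstr α β S) (hT : DegConstr α β T) : DegConstr α β (S ∪ T) := by
  constructor
  · intro u hu
    rw [upperVerts, Finset.image_union] at hu
    rcases Finset.mem_union.1 hu with h | h
    · exact le_trans (hS.1 u h) (updeg_mono Finset.subset_union_left u)
    · exact le_trans (hT.1 u h) (updeg_mono Finset.subset_union_right u)
  · intro v hv
    rw [lowerVerts, Finset.image_union] at hv
    rcases Finset.mem_union.1 hv with h | h
    · exact le_trans (hS.2 v h) (lowdeg_mono Finset.subset_union_left v)
    · exact le_trans (hT.2 v h) (lowdeg_mono Finset.subset_union_right v)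

lemma adjRel_mono {S T : Finset (V × V)} (h : S ⊆ T) {a b : V} (hab : adjRel S a b) :
    adjRel T a b := hab.imp (fun x => h x) (fun x => h x)

lemma conn_union [DecidableEq V] {S T : Finset (V × V)} {q : V}
    (hS : Conn S) (hT : Conn T) (hqS : q ∈ bverts S) (hqT : q ∈ bverts T) :
    Conn (S ∪ T) := by
  have key : ∀ a ∈ bverts (S ∪ T), Relation.ReflTransGen (adjRel (S ∪ T)) a q := by
    intro a ha
    rw [bverts_union] at ha
    rcases Finset.mem_union.1 ha with h | h
    · exact Relation.ReflTransGen.mono (fun x y => adjRel_mono Finset.subset_union_left) a q (hS a h q hqS)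
    · exact Relation.ReflTransGen.mono (fun x y => adjRel_mono Finset.subset_union_right) a q (hT a h q hqT)
  intro a ha b hb
  exact (key a ha).trans
    (by haveI : Std.Symm (adjRel (S ∪ T)) := ⟨fun x y h => Or.symm h⟩; exact Std.Symm.symm _ _ (key b hb))

/-- the significant (α,β)-community of q is unique and is a
subgraph of the (α,β)-community of q. -/
theorem sigcom_unique [DecidableEq V] (E : Finset (V × V)) (α β : ℕ) (q : V)
    (w : V × V → ENNReal) (C K : Finset (V × V))
    (hC : IsCore E α β C) (hK : IsCommunity C q K)
    (S₁ S₂ : Finset (V × V))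
    (h₁ : IsSigCom K α β q w S₁) (h₂ : IsSigCom K α β q w S₂) :
    S₁ = S₂ ∧ S₁ ⊆ K := by
  obtain ⟨hsub₁, hconn₁, hq₁, hdeg₁, hmax₁, hstrict₁⟩ := h₁
  obtain ⟨hsub₂, hconn₂, hq₂, hdeg₂, hmax₂, hstrict₂⟩ := h₂
  -- the two weights are equal
  have hw12 : S₁.inf w = S₂.inf w :=
    le_antisymm (hmax₂ S₁ hsub₁ hconn₁ hq₁ hdeg₁) (hmax₁ S₂ hsub₂ hconn₂ hq₂ hdeg₂)
  -- properties of the union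
  set U := S₁ ∪ S₂ with hU
  have hUsub : U ⊆ K := Finset.union_subset hsub₁ hsub₂
  have hUconn : Conn U := conn_union hconn₁ hconn₂ hq₁ hq₂
  have hqU : q ∈ bverts U := by rw [hU, bverts_union]; exact Finset.mem_union_left _ hq₁
  have hUdeg : DegConstr α β U := degConstr_union hdeg₁ hdeg₂
  have hUinf : U.inf w = S₁.inf w := by
    rw [hU, Finset.inf_union, ← hw12, inf_idem]
  have hsubU₁ : S₁ ⊆ U := Finset.subset_union_left
  have hsubU₂ : S₂ ⊆ U := Finset.subset_union_right
  have hU₁ : U = S₁ := by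
    by_contra hne
    exact hstrict₁ U (ssubset_of_subset_of_ne hsubU₁ (Ne.symm hne)) hUsub hUconn hqU hUdeg hUinf
  have hU₂ : U = S₂ := by
    by_contra hne
    exact hstrict₂ U (ssubset_of_subset_of_ne hsubU₂ (Ne.symm hne)) hUsub hUconn hqU hUdeg
      (by rw [hUinf, hw12])
  exact ⟨hU₁ ▸ hU₂, hsub₁⟩
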